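/- Let n ≥ 1 and let X be a multi-sorted topological structure in the signature of M̃_n satisfying (A4) and (A5). Then X satisfies (A6) and (A7) if and only if X satisfies all four of the following conditions: (A6)⁰ ⟨X₀; ≤⁰, T₀⟩ is a Priestley space; (A6)′ ≤ᵏ is a partial order on X_k for all k ∈ {1,…,n}; (A6)″ the space X_k is compact for all k ∈ {1,…,n}; (A7)′ for all 1 ≤ j ≤ k ≤ n and all x ∈ X_j and y ∈ X_k with x ≰ʲᵏ y (where ≤ᵏᵏ := ≤ᵏ), there exist mutually increasing sets U_j,…,U_k with each U_ℓ a clopen up-set of ⟨X_ℓ; ≤ˡ, T_ℓ⟩, x ∈ U_j and y ∉ U_k. -/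
import Mathlib


/-!
STATEMENT 1: Let n ≥ 1 and let X be a multi-sorted topological structure in the
signature of M̃_n satisfying (A4) and (A5). Then X satisfies (A6) and (A7) if and
only if X satisfies all four of: (A6)⁰, (A6)′, (A6)″ and (A7)′.
-/

namespace ExpandingBelnap
/-! ### Multi-sorted topological structures in the signature of the alter ego `M̃ₙ`

A multi-sorted topological structure `X = ⟨X₀ ⊔ ⋯ ⊔ Xₙ; {g_k}, {≤ᵏ}, {≤ʲᵏ}, T⟩` is
presented by a single carrier `C` (the disjoint union), a `sort` map `C → Fin (n+1)`
(each sort being clopen, which encodes the disjoint-union topology), a combined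
operation `g : C → C` (equal to `g_k` on the sort-`k` part for `k ≥ 1` and to the
identity on the sort-`0` part), and a combined relation `r : C → C → Prop`
(equal to `≤ᵏ` on pairs within sort `k` and to `≤ʲᵏ` on pairs from sort `j` to
sort `k` for `1 ≤ j < k`, and empty on all other pairs of sorts). -/

/-- `U` is an up-set for the relation `r`. -/
def IsUpset {C : Type} (r : C → C → Prop) (U : Set C) : Prop :=
  ∀ x ∈ U, ∀ y, r x y → y ∈ U

/-- `⟨C; r, T⟩` is a Priestley space: `r` is a partial order and the space is
compact and totally order-disconnected. -/
def IsPriestley (C : Type) [TopologicalSpace C] (r : C → C → Prop) : Prop :=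
  (∀ x, r x x) ∧ (∀ x y, r x y → r y x → x = y) ∧
    (∀ x y z, r x y → r y z → r x z) ∧ CompactSpace C ∧
    ∀ x y, ¬ r x y → ∃ U : Set C, IsClopen U ∧ IsUpset r U ∧ x ∈ U ∧ y ∉ U

/-- `(C, sort, g, r)` presents a multi-sorted topological structure in the signature
of `M̃ₙ`: the sorts are clopen (disjoint-union topology), `g` maps into sort `0` and
restricts to the identity on sort `0`, and the relation only relates pairs within a
sort or from sort `j` to sort `k` where `1 ≤ j < k`. -/
def IsMS {n : ℕ} {C : Type} [TopologicalSpace C]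
    (sort : C → Fin (n + 1)) (g : C → C) (r : C → C → Prop) : Prop :=
  (∀ k, IsClopen {x | sort x = k}) ∧
    (∀ x, sort (g x) = 0) ∧
    (∀ x, sort x = 0 → g x = x) ∧
    (∀ x y, r x y → sort x = sort y ∨ (0 < (sort x).val ∧ (sort x).val < (sort y).val))

/-- (A1): each `g_k : X_k → X₀` is continuous (`k ∈ [1, n]`). -/
def AxA1 {n : ℕ} {C : Type} [TopologicalSpace C]
    (sort : C → Fin (n + 1)) (g : C → C) : Prop :=
  ∀ k : Fin (n + 1), 0 < k.val → Continuous fun x : {x : C // sort x = k} => g x.1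

/-- (A2): for `k ∈ [1, n]` and `x, y ∈ X_k`, `x ≤ᵏ y` implies `g_k x = g_k y`. -/
def AxA2 {n : ℕ} {C : Type}
    (sort : C → Fin (n + 1)) (g : C → C) (r : C → C → Prop) : Prop :=
  ∀ x y, sort x = sort y → 0 < (sort x).val → r x y → g x = g y

/-- (A3): for `1 ≤ j < k`, `x ∈ X_j`, `y ∈ X_k`, `x ≤ʲᵏ y` implies `g_j x = g_k y`. -/
def AxA3 {n : ℕ} {C : Type}
    (sort : C → Fin (n + 1)) (g : C → C) (r : C → C → Prop) : Prop :=
  ∀ x y, 0 < (sort x).val → (sort x).val < (sort y).val → r x y → g x = g y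

/-- (A4): for `1 ≤ j < k`, `x, y ∈ X_j`, `u, v ∈ X_k`:
`x ≤ʲ y`, `y ≤ʲᵏ u`, `u ≤ᵏ v` imply `x ≤ʲᵏ v`. -/
def AxA4 {n : ℕ} {C : Type} (sort : C → Fin (n + 1)) (r : C → C → Prop) : Prop :=
  ∀ x y u v, 0 < (sort x).val → sort x = sort y → (sort y).val < (sort u).val →
    sort u = sort v → r x y → r y u → r u v → r x v

/-- (A5): for `1 ≤ j < k < l`, `x ∈ X_j`, `y ∈ X_k`, `z ∈ X_l`:
`x ≤ʲᵏ y` and `y ≤ᵏˡ z` imply `x ≤ʲˡ z`. -/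
def AxA5 {n : ℕ} {C : Type} (sort : C → Fin (n + 1)) (r : C → C → Prop) : Prop :=
  ∀ x y z, 0 < (sort x).val → (sort x).val < (sort y).val →
    (sort y).val < (sort z).val → r x y → r y z → r x z

/-- (A6): each `⟨X_k; ≤ᵏ, T_k⟩` is a Priestley space (`k ∈ [0, n]`). -/
def AxA6 {n : ℕ} {C : Type} [TopologicalSpace C]
    (sort : C → Fin (n + 1)) (r : C → C → Prop) : Prop :=
  ∀ k : Fin (n + 1), IsPriestley {x : C // sort x = k} fun a b => r a.1 b.1

/-- `U j, …, U k` is a mutually increasing family: each `U l` is a subset of `X_l`,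
each `U l` is an up-set of `⟨X_l; ≤ˡ⟩`, and for `max(1,j) ≤ i ≤ l ≤ k`,
`x ∈ U i`, `y ∈ X_l` and `x ≤ⁱˡ y` imply `y ∈ U l`. -/
def MutInc {n : ℕ} {C : Type} (sort : C → Fin (n + 1)) (r : C → C → Prop)
    (j k : Fin (n + 1)) (U : Fin (n + 1) → Set C) : Prop :=
  (∀ l, j ≤ l → l ≤ k → U l ⊆ {x | sort x = l}) ∧
    ∀ i l, j ≤ i → i ≤ l → l ≤ k → (i = l ∨ 0 < i.val) →
      ∀ x ∈ U i, ∀ y, sort y = l → r x y → y ∈ U l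

/-- `U` is a clopen subset of the sort-`l` subspace `⟨X_l; T_l⟩`. -/
def ClopenSort {n : ℕ} {C : Type} [TopologicalSpace C]
    (sort : C → Fin (n + 1)) (l : Fin (n + 1)) (U : Set C) : Prop :=
  IsClopen {z : {x : C // sort x = l} | z.1 ∈ U}

/-- (A7): for `1 ≤ j < k`, `x ∈ X_j`, `y ∈ X_k` with `x ≰ʲᵏ y`, there is a mutually
increasing family of clopen up-sets `U j, …, U k` with `x ∈ U j` and `y ∉ U k`. -/
def AxA7 {n : ℕ} {C : Type} [TopologicalSpace C]
    (sort : C → Fin (n + 1)) (r : C → C → Prop) : Prop :=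
  ∀ j k : Fin (n + 1), 0 < j.val → j < k → ∀ x y, sort x = j → sort y = k → ¬ r x y →
    ∃ U : Fin (n + 1) → Set C, MutInc sort r j k U ∧
      (∀ l, j ≤ l → l ≤ k → ClopenSort sort l (U l)) ∧ x ∈ U j ∧ y ∉ U k

/-- The conjunction of axioms (A1)–(A7). -/
def AxiomsA {n : ℕ} {C : Type} [TopologicalSpace C]
    (sort : C → Fin (n + 1)) (g : C → C) (r : C → C → Prop) : Prop :=
  AxA1 sort g ∧ AxA2 sort g r ∧ AxA3 sort g r ∧ AxA4 sort r ∧ AxA5 sort r ∧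
    AxA6 sort r ∧ AxA7 sort r

/-- (A6)⁰: `⟨X₀; ≤⁰, T₀⟩` is a Priestley space. -/
def AxA6zero {n : ℕ} {C : Type} [TopologicalSpace C]
    (sort : C → Fin (n + 1)) (r : C → C → Prop) : Prop :=
  IsPriestley {x : C // sort x = 0} fun a b => r a.1 b.1

/-- (A6)′: `≤ᵏ` is a partial order on `X_k`, for all `k ∈ [1, n]`. -/
def AxA6ord {n : ℕ} {C : Type} (sort : C → Fin (n + 1)) (r : C → C → Prop) : Prop :=
  ∀ k : Fin (n + 1), 0 < k.val →
    (∀ x, sort x = k → r x x) ∧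
      (∀ x y, sort x = k → sort y = k → r x y → r y x → x = y) ∧
      (∀ x y z, sort x = k → sort y = k → sort z = k → r x y → r y z → r x z)

/-- (A6)″: the space `⟨X_k; T_k⟩` is compact, for all `k ∈ [1, n]`. -/
def AxA6cpt {n : ℕ} {C : Type} [TopologicalSpace C]
    (sort : C → Fin (n + 1)) : Prop :=
  ∀ k : Fin (n + 1), 0 < k.val → CompactSpace {x : C // sort x = k}

/-- (A7)′: like (A7) but for all `1 ≤ j ≤ k ≤ n` (where `≤ᵏᵏ := ≤ᵏ`). -/
def AxA7' {n : ℕ} {C : Type} [TopologicalSpace C]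
    (sort : C → Fin (n + 1)) (r : C → C → Prop) : Prop :=
  ∀ j k : Fin (n + 1), 0 < j.val → j ≤ k → ∀ x y, sort x = j → sort y = k → ¬ r x y →
    ∃ U : Fin (n + 1) → Set C, MutInc sort r j k U ∧
      (∀ l, j ≤ l → l ≤ k → ClopenSort sort l (U l)) ∧ x ∈ U j ∧ y ∉ U k

theorem statement1 (n : ℕ) (hn : 1 ≤ n) (C : Type) [TopologicalSpace C]
    (sort : C → Fin (n + 1)) (g : C → C) (r : C → C → Prop)
    (hMS : IsMS sort g r) (h4 : AxA4 sort r) (h5 : AxA5 sort r) :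
    (AxA6 sort r ∧ AxA7 sort r) ↔
      (AxA6zero sort r ∧ AxA6ord sort r ∧ AxA6cpt sort ∧ AxA7' sort r) := by
  constructor
  · rintro ⟨h6, h7⟩
    refine ⟨h6 0, ?_, ?_, ?_⟩
    · -- A6ord
      intro k hk
      obtain ⟨hrefl, hanti, htrans, _, _⟩ := h6 k
      refine ⟨fun x hx => hrefl ⟨x, hx⟩, ?_, ?_⟩
      · intro x y hx hy hxy hyx
        exact congrArg Subtype.val (hanti ⟨x, hx⟩ ⟨y, hy⟩ hxy hyx)
      · intro x y z hx hy hz hxy hyz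
        exact htrans ⟨x, hx⟩ ⟨y, hy⟩ ⟨z, hz⟩ hxy hyz
    · -- A6cpt
      intro k hk
      exact (h6 k).2.2.2.1
    · -- A7'
      intro j k hj hjk x y hx hy hxy
      rcases lt_or_eq_of_le hjk with hlt | rfl
      · exact h7 j k hj hlt x y hx hy hxy
      · obtain ⟨_, _, _, _, hdisc⟩ := h6 j
        obtain ⟨W, hWcl, hWup, hxW, hyW⟩ := hdisc ⟨x, hx⟩ ⟨y, hy⟩ hxy
        refine ⟨fun l => if l = j then Subtype.val '' W else ∅, ⟨?_, ?_⟩, ?_, ?_, ?_⟩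
        · intro l hjl hlj
          have : j = l := le_antisymm hjl hlj
          subst this
          simp only [if_pos rfl]
          rintro _ ⟨w, _, rfl⟩
          exact w.2
        · intro i l hji hil hlj _ a ha b hb hab
          have hi : j = i := le_antisymm hji (hil.trans hlj)
          have hl : j = l := le_antisymm (hji.trans hil) hlj
          subst hi; subst hl
          simp only [if_pos rfl] at ha ⊢
          obtain ⟨w, hw, rfl⟩ := ha
          exact ⟨⟨b, hb⟩, hWup w hw ⟨b, hb⟩ hab, rfl⟩
        · intro l hjl hlj
          have : j = l := le_antisymm hjl hlj
          subst this
          unfold ClopenSort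
          have he : {z : {x : C // sort x = j} |
              z.1 ∈ (if j = j then Subtype.val '' W else ∅)} = W := by
            rw [if_pos rfl]
            ext z
            exact Subtype.coe_injective.mem_set_image
          rw [he]
          exact hWcl
        · simp only [if_pos rfl]
          exact ⟨⟨x, hx⟩, hxW, rfl⟩
        · simp only [if_pos rfl]
          rintro ⟨w, hw, hweq⟩
          exact hyW (by rwa [show w = ⟨y, hy⟩ from Subtype.ext hweq] at hw)
  · rintro ⟨h60, h6o, h6c, h7'⟩
    constructor
    · -- A6
      intro k
      by_cases hk : 0 < k.val
      · obtain ⟨ho1, ho2, ho3⟩ := h6o k hk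
        refine ⟨fun x => ho1 x.1 x.2, ?_, ?_, h6c k hk, ?_⟩
        · intro x y hxy hyx
          exact Subtype.ext (ho2 x.1 y.1 x.2 y.2 hxy hyx)
        · intro x y z hxy hyz
          exact ho3 x.1 y.1 z.1 x.2 y.2 z.2 hxy hyz
        · intro x y hxy
          obtain ⟨U, ⟨_, hUinc⟩, hUcl, hxU, hyU⟩ :=
            h7' k k hk le_rfl x.1 y.1 x.2 y.2 hxy
          refine ⟨{z | z.1 ∈ U k}, hUcl k le_rfl le_rfl, ?_, hxU, hyU⟩
          intro a ha b hab
          exact hUinc k k le_rfl le_rfl le_rfl (Or.inl rfl) a.1 ha b.1 b.2 hab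
      · have hk0 : k = 0 := by
          apply Fin.ext
          simpa using Nat.eq_zero_of_not_pos hk
        subst hk0
        exact h60
    · -- A7
      intro j k hj hjk x y hx hy hxy
      exact h7' j k hj (le_of_lt hjk) x y hx hy hxy

end ExpandingBelnap
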